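/- Let F be a monotone set function with F(∅)=0, c a positive cost function, and suppose a sequence G_0 = ∅, G_i = G_{i−1} ∪ {x_i} satisfies F(G_i) − F(G_{i−1}) ≥ (c(x_i)/C)·(OPT − F(G_{i−1})) for all i = 1,...,L, where OPT ≥ 0 and Σ_{i=1}^{L} c(x_i) ≥ C. Then F(G_L) ≥ (1 − e^{-1})·OPT. -/

import Mathlib

/-- If each greedy step closes a (c(xᵢ)/C) fraction of the gap to OPT and the
total cost spent is at least the budget C, then F(G_L) ≥ (1 - e⁻¹)·OPT. -/
theorem budgeted_greedy_guarantee {Ω : Type*} [Fintype Ω] [DecidableEq Ω]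
    (F : Finset Ω → ℝ) (c : Ω → ℝ) (hc : ∀ x, 0 < c x) (C : ℝ) (hC : 0 < C)
    (hmono : ∀ A B : Finset Ω, A ⊆ B → F A ≤ F B)
    (hempty : F ∅ = 0)
    (OPT : ℝ) (hOPT : 0 ≤ OPT)
    (L : ℕ) (G : ℕ → Finset Ω) (x : ℕ → Ω)
    (hG0 : G 0 = ∅)
    (hGstep : ∀ i, 1 ≤ i → i ≤ L → G i = insert (x i) (G (i - 1)))
    (hstep : ∀ i, 1 ≤ i → i ≤ L →
      F (G i) - F (G (i - 1)) ≥ (c (x i) / C) * (OPT - F (G (i - 1))))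
    (hbudget : C ≤ ∑ i ∈ Finset.Icc 1 L, c (x i)) :
    F (G L) ≥ (1 - Real.exp (-1)) * OPT := by
  have key : ∀ k, k ≤ L →
      OPT - F (G k) ≤ OPT * Real.exp (-(∑ i ∈ Finset.Icc 1 k, c (x i)) / C) := by
    intro k
    induction k with
    | zero =>
      intro _
      simp [hG0, hempty]
    | succ k ih =>
      intro hkL
      have hk : k ≤ L := Nat.le_of_succ_le hkL
      have ihk := ih hk
      have h1 : 1 ≤ k + 1 := Nat.succ_le_succ (Nat.zero_le k)
      have hst := hstep (k + 1) h1 hkL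
      have hG : G (k + 1) = insert (x (k + 1)) (G k) := by
        simpa using hGstep (k + 1) h1 hkL
      have hsum : (∑ i ∈ Finset.Icc 1 (k + 1), c (x i))
          = (∑ i ∈ Finset.Icc 1 k, c (x i)) + c (x (k + 1)) := by
        rw [Finset.sum_Icc_succ_top h1]
      set t := c (x (k + 1)) / C with ht
      have htpos : 0 < t := div_pos (hc _) hC
      have hrec : OPT - F (G (k + 1)) ≤ (1 - t) * (OPT - F (G k)) := by
        have : F (G (k + 1)) - F (G k) ≥ t * (OPT - F (G k)) := by
          simpa using hst
        nlinarith
      have hexp : (1 : ℝ) - t ≤ Real.exp (-t) := by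
        have := Real.add_one_le_exp (-t)
        linarith
      rw [hsum]
      have hsplit : -((∑ i ∈ Finset.Icc 1 k, c (x i)) + c (x (k + 1))) / C
          = (-(∑ i ∈ Finset.Icc 1 k, c (x i)) / C) + (-t) := by
        field_simp [ht]
        rw [ht]
        field_simp
        ring
      rw [hsplit, Real.exp_add]
      by_cases hgap : 0 ≤ OPT - F (G k)
      · have h2 : (1 - t) * (OPT - F (G k)) ≤ Real.exp (-t) * (OPT - F (G k)) :=
          mul_le_mul_of_nonneg_right hexp hgap
        have h3 : Real.exp (-t) * (OPT - F (G k)) ≤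
            Real.exp (-t) * (OPT * Real.exp (-(∑ i ∈ Finset.Icc 1 k, c (x i)) / C)) :=
          mul_le_mul_of_nonneg_left ihk (Real.exp_nonneg _)
        calc OPT - F (G (k + 1)) ≤ (1 - t) * (OPT - F (G k)) := hrec
          _ ≤ Real.exp (-t) * (OPT - F (G k)) := h2
          _ ≤ Real.exp (-t) * (OPT * Real.exp (-(∑ i ∈ Finset.Icc 1 k, c (x i)) / C)) := h3
          _ = OPT * (Real.exp (-(∑ i ∈ Finset.Icc 1 k, c (x i)) / C) * Real.exp (-t)) := by ring
      · push_neg at hgap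
        have hsub : G k ⊆ G (k + 1) := by rw [hG]; exact Finset.subset_insert _ _
        have hm := hmono _ _ hsub
        have : OPT - F (G (k + 1)) ≤ OPT - F (G k) := by linarith
        have hpos : 0 ≤ OPT * (Real.exp (-(∑ i ∈ Finset.Icc 1 k, c (x i)) / C) * Real.exp (-t)) :=
          mul_nonneg hOPT (mul_nonneg (Real.exp_nonneg _) (Real.exp_nonneg _))
        linarith
  have hkey := key L le_rfl
  have hS : -(∑ i ∈ Finset.Icc 1 L, c (x i)) / C ≤ -1 := by
    rw [div_le_iff₀ hC]
    linarith
  have hexp2 : Real.exp (-(∑ i ∈ Finset.Icc 1 L, c (x i)) / C) ≤ Real.exp (-1) :=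
    Real.exp_le_exp.mpr hS
  have : OPT * Real.exp (-(∑ i ∈ Finset.Icc 1 L, c (x i)) / C) ≤ OPT * Real.exp (-1) :=
    mul_le_mul_of_nonneg_left hexp2 hOPT
  nlinarith
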